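/- A vector p = (p_S)_{∅ ≠ S ⊆ {1,...,n}} ∈ ℝ^{2^n − 1} lies in the complete probability polytope CP_n (the convex hull of the 2^n vectors u_ε = (∏_{i∈S} ε_i)_{∅ ≠ S ⊆ {1,...,n}}, ε ∈ {0,1}^n) if and only if for every ε ∈ {0,1}^n, the quantity h(ε) := Σ_{T ⊇ supp(ε)} (−1)^{|T| − |supp(ε)|} p_T is nonnegative, where supp(ε) = { i : ε_i = 1 } and p_∅ := 1. -/

import Mathlib

open Finset

lemma CP_sum_pow_neg_one_real {α : Type*} [DecidableEq α] (x : Finset α) :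
    (∑ m ∈ x.powerset, (-1 : ℝ) ^ m.card) = if x = ∅ then 1 else 0 := by
  have h := Finset.sum_powerset_neg_one_pow_card (x := x)
  have h2 := congrArg (fun z : ℤ => (z : ℝ)) h
  push_cast at h2
  simpa using h2

lemma CP_icc1 {n : ℕ} (A B : Finset (Fin n)) :
    ∑ T ∈ Finset.Icc A B, (-1 : ℝ) ^ (T.card - A.card) = if A = B then 1 else 0 := by
  by_cases hAB : A ⊆ B
  · rw [Finset.sum_nbij' (i := fun T => T \ A) (j := fun U => U ∪ A)
      (t := (B \ A).powerset) (g := fun U => (-1 : ℝ) ^ U.card)]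
    · rw [CP_sum_pow_neg_one_real]
      congr 1
      simp only [Finset.sdiff_eq_empty_iff_subset, eq_iff_iff]
      exact ⟨fun h => subset_antisymm hAB h, fun h => h ▸ Finset.Subset.refl _⟩
    · intro T hT
      rw [Finset.mem_Icc] at hT
      exact Finset.mem_powerset.2 (Finset.sdiff_subset_sdiff hT.2 le_rfl)
    · intro U hU
      rw [Finset.mem_powerset] at hU
      rw [Finset.mem_Icc]
      exact ⟨Finset.subset_union_right, Finset.union_subset (hU.trans Finset.sdiff_subset) hAB⟩
    · intro T hT
      rw [Finset.mem_Icc] at hT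
      exact Finset.sdiff_union_of_subset hT.1
    · intro U hU
      rw [Finset.mem_powerset] at hU
      rw [Finset.union_sdiff_right, Finset.sdiff_eq_self_iff_disjoint.2]
      exact (Finset.sdiff_disjoint).mono_left hU
    · intro T hT
      rw [Finset.mem_Icc] at hT
      rw [Finset.card_sdiff_of_subset hT.1]
  · rw [Finset.Icc_eq_empty hAB, Finset.sum_empty, if_neg]
    rintro rfl; exact hAB le_rfl

lemma CP_icc2 {n : ℕ} (S T : Finset (Fin n)) :
    ∑ A ∈ Finset.Icc S T, (-1 : ℝ) ^ (T.card - A.card) = if S = T then 1 else 0 := by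
  by_cases hST : S ⊆ T
  · rw [Finset.sum_nbij' (i := fun A => T \ A) (j := fun U => T \ U)
      (t := (T \ S).powerset) (g := fun U => (-1 : ℝ) ^ U.card)]
    · rw [CP_sum_pow_neg_one_real]
      congr 1
      simp only [Finset.sdiff_eq_empty_iff_subset, eq_iff_iff]
      exact ⟨fun h => subset_antisymm hST h, fun h => h ▸ Finset.Subset.refl _⟩
    · intro A hA
      rw [Finset.mem_Icc] at hA
      exact Finset.mem_powerset.2 (Finset.sdiff_subset_sdiff le_rfl hA.1)
    · intro U hU
      rw [Finset.mem_powerset] at hU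
      rw [Finset.mem_Icc]
      refine ⟨Finset.subset_sdiff.2 ⟨hST, ?_⟩, Finset.sdiff_subset⟩
      exact (Finset.sdiff_disjoint).mono_left hU |>.symm
    · intro A hA
      rw [Finset.mem_Icc] at hA
      exact Finset.sdiff_sdiff_eq_self hA.2
    · intro U hU
      rw [Finset.mem_powerset] at hU
      exact Finset.sdiff_sdiff_eq_self (hU.trans Finset.sdiff_subset)
    · intro A hA
      rw [Finset.mem_Icc] at hA
      rw [Finset.card_sdiff_of_subset hA.2]
  · rw [Finset.Icc_eq_empty hST, Finset.sum_empty, if_neg]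
    rintro rfl; exact hST le_rfl

lemma CP_key {n : ℕ} (q : Finset (Fin n) → ℝ) (S : Finset (Fin n)) :
    ∑ A : Finset (Fin n), (if S ⊆ A then ∑ T : Finset (Fin n),
      (if A ⊆ T then (-1 : ℝ) ^ (T.card - A.card) * q T else 0) else 0) = q S := by
  have step : ∀ A : Finset (Fin n), (if S ⊆ A then ∑ T : Finset (Fin n),
      (if A ⊆ T then (-1 : ℝ) ^ (T.card - A.card) * q T else 0) else 0)
      = ∑ T : Finset (Fin n),
        (if S ⊆ A ∧ A ⊆ T then (-1 : ℝ) ^ (T.card - A.card) * q T else 0) := by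
    intro A
    split_ifs with h
    · exact Finset.sum_congr rfl fun T _ => by simp [h]
    · simp [h]
  rw [Finset.sum_congr rfl fun A _ => step A, Finset.sum_comm]
  have step2 : ∀ T : Finset (Fin n),
      (∑ A : Finset (Fin n), if S ⊆ A ∧ A ⊆ T then (-1 : ℝ) ^ (T.card - A.card) * q T else 0)
      = (if S = T then 1 else 0) * q T := by
    intro T
    rw [← CP_icc2 S T, Finset.sum_mul, ← Finset.sum_filter]
    apply Finset.sum_congr
    · ext A; simp [Finset.mem_Icc]
    · intro A _; rfl
  rw [Finset.sum_congr rfl fun T _ => step2 T]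
  simp

def CP_suppEquiv (n : ℕ) : (Fin n → Bool) ≃ Finset (Fin n) where
  toFun ε := Finset.univ.filter (fun i => ε i = true)
  invFun A := fun i => decide (i ∈ A)
  left_inv ε := by funext i; by_cases h : ε i <;> simp [h]
  right_inv A := by ext i; simp

lemma CP_vertex_eq {n : ℕ} (ε : Fin n → Bool) (S : Finset (Fin n)) :
    (∏ i ∈ S, (if ε i then (1 : ℝ) else 0))
      = if S ⊆ Finset.univ.filter (fun i => ε i = true) then 1 else 0 := by
  by_cases h : S ⊆ Finset.univ.filter (fun i => ε i = true)
  · rw [if_pos h]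
    apply Finset.prod_eq_one
    intro i hi
    have := h hi
    rw [Finset.mem_filter] at this
    simp [this.2]
  · rw [if_neg h]
    obtain ⟨i, hiS, hi⟩ := Finset.not_subset.1 h
    apply Finset.prod_eq_zero hiS
    rw [Finset.mem_filter] at hi
    push_neg at hi
    have := hi (Finset.mem_univ i)
    simp [Bool.eq_false_iff.2 this]

/-- The vertex of the complete probability polytope `CP_n` associated with
`ε ∈ {0,1}^n`: the coordinate indexed by a nonempty `S ⊆ {1,…,n}` is `∏_{i ∈ S} ε_i`. -/
noncomputable def cpVertex (n : ℕ) (ε : Fin n → Bool) :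
    {S : Finset (Fin n) // S.Nonempty} → ℝ :=
  fun S => ∏ i ∈ S.1, (if ε i then (1 : ℝ) else 0)

/-- The inclusion–exclusion functional `h(ε)(p) = ∑_{T ⊇ supp ε} (−1)^{|T|−|supp ε|} p_T`,
with the convention `p_∅ = 1`. -/
noncomputable def hFun (n : ℕ) (ε : Fin n → Bool)
    (p : {S : Finset (Fin n) // S.Nonempty} → ℝ) : ℝ :=
  ∑ T : Finset (Fin n),
    if (Finset.univ.filter (fun i => ε i = true)) ⊆ T then
      (-1 : ℝ) ^ (T.card - (Finset.univ.filter (fun i => ε i = true)).card) *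
        (if h : T.Nonempty then p ⟨T, h⟩ else 1)
    else 0

/-- `hFun` in terms of the extended coordinate function `q`. -/
lemma hFun_eq (n : ℕ) (ε : Fin n → Bool) (p : {S : Finset (Fin n) // S.Nonempty} → ℝ) :
    hFun n ε p = ∑ T : Finset (Fin n),
      if (CP_suppEquiv n ε) ⊆ T then
        (-1 : ℝ) ^ (T.card - (CP_suppEquiv n ε).card) *
          (if h : T.Nonempty then p ⟨T, h⟩ else 1)
      else 0 := rfl

lemma hFun_vertex {n : ℕ} (ε δ : Fin n → Bool) :
    hFun n ε (cpVertex n δ) = if ε = δ then 1 else 0 := by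
  rw [hFun_eq]
  have hq : ∀ T : Finset (Fin n),
      (if h : T.Nonempty then cpVertex n δ ⟨T, h⟩ else 1)
        = if T ⊆ CP_suppEquiv n δ then 1 else 0 := by
    intro T
    have he : CP_suppEquiv n δ = Finset.univ.filter (fun i => δ i = true) := rfl
    rw [he, ← CP_vertex_eq δ T]
    split_ifs with h
    · rfl
    · rw [Finset.not_nonempty_iff_eq_empty.1 h, Finset.prod_empty]
  calc hFun n ε (cpVertex n δ)
      = ∑ T : Finset (Fin n), (if CP_suppEquiv n ε ⊆ T ∧ T ⊆ CP_suppEquiv n δ then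
          (-1 : ℝ) ^ (T.card - (CP_suppEquiv n ε).card) else 0) := by
        rw [hFun_eq]
        apply Finset.sum_congr rfl
        intro T _
        rw [hq T]
        by_cases h1 : CP_suppEquiv n ε ⊆ T <;> by_cases h2 : T ⊆ CP_suppEquiv n δ <;>
          simp [h1, h2]
    _ = ∑ T ∈ Finset.Icc (CP_suppEquiv n ε) (CP_suppEquiv n δ),
          (-1 : ℝ) ^ (T.card - (CP_suppEquiv n ε).card) := by
        rw [← Finset.sum_filter]
        apply Finset.sum_congr
        · ext T; simp [Finset.mem_Icc]
        · intro T _; rfl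
    _ = if CP_suppEquiv n ε = CP_suppEquiv n δ then 1 else 0 := CP_icc1 _ _
    _ = if ε = δ then 1 else 0 := by
        congr 1
        simp only [eq_iff_iff]
        exact ⟨fun h => (CP_suppEquiv n).injective h, fun h => h ▸ rfl⟩

lemma hFun_affine {n : ℕ} (ε : Fin n → Bool) (x y : {S : Finset (Fin n) // S.Nonempty} → ℝ)
    (a b : ℝ) (hab : a + b = 1) :
    hFun n ε (a • x + b • y) = a * hFun n ε x + b * hFun n ε y := by
  unfold hFun
  rw [Finset.mul_sum, Finset.mul_sum, ← Finset.sum_add_distrib]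
  apply Finset.sum_congr rfl
  intro T _
  split_ifs with h1 h2
  · simp only [Pi.add_apply, Pi.smul_apply, smul_eq_mul]
    ring
  · simp only [mul_one]
    rw [← add_mul, hab, one_mul]
  · ring

lemma CP_sum_weights {n : ℕ} (p : {S : Finset (Fin n) // S.Nonempty} → ℝ) :
    ∑ ε : Fin n → Bool, hFun n ε p = 1 := by
  set q : Finset (Fin n) → ℝ := fun T => if h : T.Nonempty then p ⟨T, h⟩ else 1 with hq
  have h1 : ∑ ε : Fin n → Bool, hFun n ε p
      = ∑ A : Finset (Fin n), (if (∅ : Finset (Fin n)) ⊆ A then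
          ∑ T : Finset (Fin n), (if A ⊆ T then (-1 : ℝ) ^ (T.card - A.card) * q T else 0)
        else 0) := by
    apply Fintype.sum_equiv (CP_suppEquiv n)
    intro ε
    rw [hFun_eq, if_pos (Finset.empty_subset _)]
  rw [h1, CP_key q ∅]
  simp [hq]

lemma CP_repr {n : ℕ} (p : {S : Finset (Fin n) // S.Nonempty} → ℝ) :
    ∑ ε : Fin n → Bool, hFun n ε p • cpVertex n ε = p := by
  set q : Finset (Fin n) → ℝ := fun T => if h : T.Nonempty then p ⟨T, h⟩ else 1 with hq
  funext S
  rw [Finset.sum_apply]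
  have h1 : ∑ ε : Fin n → Bool, (hFun n ε p • cpVertex n ε) S
      = ∑ A : Finset (Fin n), (if S.1 ⊆ A then
          ∑ T : Finset (Fin n), (if A ⊆ T then (-1 : ℝ) ^ (T.card - A.card) * q T else 0)
        else 0) := by
    apply Fintype.sum_equiv (CP_suppEquiv n)
    intro ε
    have hv : cpVertex n ε S = if S.1 ⊆ CP_suppEquiv n ε then 1 else 0 :=
      CP_vertex_eq ε S.1
    rw [Pi.smul_apply, smul_eq_mul, hv, mul_ite, mul_one, mul_zero, hFun_eq]
  rw [h1, CP_key q S.1]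
  simp only [hq]
  rw [dif_pos S.2]

/-- `H`-representation of the complete probability polytope:
`p ∈ CP_n` if and only if `h(ε)(p) ≥ 0` for every `ε ∈ {0,1}^n`. -/
theorem mem_completeProbabilityPolytope_iff (n : ℕ)
    (p : {S : Finset (Fin n) // S.Nonempty} → ℝ) :
    p ∈ convexHull ℝ (Set.range (cpVertex n)) ↔
      ∀ ε : Fin n → Bool, 0 ≤ hFun n ε p := by
  constructor
  · intro hp ε
    have hsub : Set.range (cpVertex n) ⊆ {x | 0 ≤ hFun n ε x} := by
      rintro _ ⟨δ, rfl⟩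
      show (0 : ℝ) ≤ hFun n ε (cpVertex n δ)
      rw [hFun_vertex]
      split_ifs <;> norm_num
    have hconv : Convex ℝ {x : {S : Finset (Fin n) // S.Nonempty} → ℝ | 0 ≤ hFun n ε x} := by
      intro x hx y hy a b ha hb hab
      show (0 : ℝ) ≤ hFun n ε (a • x + b • y)
      rw [hFun_affine ε x y a b hab]
      exact add_nonneg (mul_nonneg ha hx) (mul_nonneg hb hy)
    exact convexHull_min hsub hconv hp
  · intro h
    have hw1 : ∑ ε ∈ Finset.univ, hFun n ε p = 1 := CP_sum_weights p
    have hmem := Finset.centerMass_mem_convexHull (Finset.univ)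
      (fun ε _ => h ε) (by rw [hw1]; norm_num)
      (fun ε _ => Set.mem_range_self (f := cpVertex n) ε)
    rwa [Finset.centerMass_eq_of_sum_1 _ _ hw1, CP_repr p] at hmem
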